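/- arXiv:2508.00653 — 4 statements merged into one kernel-verified Lean document; each statement's English description precedes it below -/
import Mathlib

section
/- Let Δ' be a set, m ∈ ℕ, level : Δ' → Fin (2^m) a function, and F ⊆ Δ' × Δ' a relation such that: (i) every element of level < 2^m − 1 has exactly one F-successor, (ii) elements of level 2^m − 1 have no F-successor, (iii) every element of level > 0 has exactly one F-predecessor, (iv) elements of level 0 have no F-predecessor, and (v) F-edges increase level by exactly 1. Then, letting ≈ be the equivalence relation generated by F and Δ the set of ≈-classes, the map δ' ↦ ([δ']_≈, level(δ')) is a bijection from Δ' to Δ × Fin (2^m). -/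
section Aux
variable {Δ' : Type*} {m : ℕ} (level : Δ' → Fin (2 ^ m)) (F : Δ' → Δ' → Prop)

noncomputable def predFn (h3 : ∀ x, 0 < (level x : ℕ) → ∃! y, F y x) (x : Δ') : Δ' :=
  if h : 0 < (level x : ℕ) then (h3 x h).exists.choose else x

noncomputable def succFn (h1 : ∀ x, (level x : ℕ) < 2 ^ m - 1 → ∃! y, F x y) (x : Δ') : Δ' :=
  if h : (level x : ℕ) < 2 ^ m - 1 then (h1 x h).exists.choose else x

variable (h1 : ∀ x, (level x : ℕ) < 2 ^ m - 1 → ∃! y, F x y)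
variable (h3 : ∀ x, 0 < (level x : ℕ) → ∃! y, F y x)
variable (h5 : ∀ x y, F x y → (level y : ℕ) = (level x : ℕ) + 1)

theorem pred_spec {x : Δ'} (h : 0 < (level x : ℕ)) : F (predFn level F h3 x) x := by
  rw [predFn, dif_pos h]; exact (h3 x h).exists.choose_spec

theorem pred_id {x : Δ'} (h : (level x : ℕ) = 0) : predFn level F h3 x = x := by
  rw [predFn, dif_neg (by omega)]

include h5 in
theorem level_pred {x : Δ'} (h : 0 < (level x : ℕ)) :
    (level (predFn level F h3 x) : ℕ) = (level x : ℕ) - 1 := by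
  have := h5 _ _ (pred_spec level F h3 h); omega

include h5 in
theorem pred_unique {x y : Δ'} (h : F y x) : predFn level F h3 x = y := by
  have hp : 0 < (level x : ℕ) := by have := h5 _ _ h; omega
  rw [predFn, dif_pos hp]
  exact (h3 x hp).unique (h3 x hp).exists.choose_spec h

theorem succ_spec {x : Δ'} (h : (level x : ℕ) < 2 ^ m - 1) : F x (succFn level F h1 x) := by
  rw [succFn, dif_pos h]; exact (h1 x h).exists.choose_spec

include h5 in
theorem succ_unique {x y : Δ'} (h : F x y) : succFn level F h1 x = y := by
  have hy := (level y).isLt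
  have := h5 _ _ h
  have hs : (level x : ℕ) < 2 ^ m - 1 := by
    have : 0 < 2 ^ m := Nat.pow_pos (by norm_num)
    omega
  rw [succFn, dif_pos hs]
  exact (h1 x hs).unique (h1 x hs).exists.choose_spec h

include h5 in
theorem level_iter_pred : ∀ (n : ℕ) (x : Δ'), n ≤ (level x : ℕ) →
    (level ((predFn level F h3)^[n] x) : ℕ) = (level x : ℕ) - n := by
  intro n
  induction n with
  | zero => intro x _; simp
  | succ n ih =>
    intro x hn
    rw [Function.iterate_succ_apply]
    have hp : 0 < (level x : ℕ) := by omega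
    have hl := level_pred level F h3 h5 hp
    rw [ih _ (by omega), hl]
    omega

theorem eqv_pred (x : Δ') : Relation.EqvGen F x (predFn level F h3 x) := by
  by_cases h : 0 < (level x : ℕ)
  · exact Relation.EqvGen.symm _ _ (Relation.EqvGen.rel _ _ (pred_spec level F h3 h))
  · rw [pred_id level F h3 (by omega)]; exact Relation.EqvGen.refl x

include h5 in
theorem eqv_iter_pred (n : ℕ) (x : Δ') : Relation.EqvGen F x ((predFn level F h3)^[n] x) := by
  induction n with
  | zero => exact Relation.EqvGen.refl x
  | succ n ih =>
    rw [Function.iterate_succ_apply']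
    exact Relation.EqvGen.trans _ _ _ ih (eqv_pred level F h3 _)

noncomputable def rootFn (x : Δ') : Δ' := (predFn level F h3)^[(level x : ℕ)] x

include h5 in
theorem level_root (x : Δ') : (level (rootFn level F h3 x) : ℕ) = 0 := by
  rw [rootFn, level_iter_pred level F h3 h5 _ _ le_rfl]; omega

include h5 in
theorem root_F {x y : Δ'} (h : F x y) : rootFn level F h3 y = rootFn level F h3 x := by
  have hl := h5 _ _ h
  rw [rootFn, rootFn, hl, Function.iterate_succ_apply, pred_unique level F h3 h5 h]

include h5 in
theorem root_eqv {x y : Δ'} (h : Relation.EqvGen F x y) :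
    rootFn level F h3 x = rootFn level F h3 y := by
  induction h with
  | rel a b hab => exact (root_F level F h3 h5 hab).symm
  | refl a => rfl
  | symm a b _ ih => exact ih.symm
  | trans a b c _ _ ih1 ih2 => exact ih1.trans ih2

include h5 in
theorem level_iter_succ : ∀ (n : ℕ) (x : Δ'), (level x : ℕ) + n ≤ 2 ^ m - 1 →
    (level ((succFn level F h1)^[n] x) : ℕ) = (level x : ℕ) + n := by
  intro n
  induction n with
  | zero => intro x _; simp
  | succ n ih =>
    intro x hn
    rw [Function.iterate_succ_apply]
    have hs : (level x : ℕ) < 2 ^ m - 1 := by omega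
    have hl := h5 _ _ (succ_spec level F h1 hs)
    rw [ih _ (by omega), hl]
    omega

theorem eqv_iter_succ (n : ℕ) (x : Δ') : Relation.EqvGen F x ((succFn level F h1)^[n] x) := by
  induction n with
  | zero => exact Relation.EqvGen.refl x
  | succ n ih =>
    rw [Function.iterate_succ_apply']
    refine Relation.EqvGen.trans _ _ _ ih ?_
    by_cases h : (level ((succFn level F h1)^[n] x) : ℕ) < 2 ^ m - 1
    · exact Relation.EqvGen.rel _ _ (succ_spec level F h1 h)
    · rw [succFn, dif_neg h]; exact Relation.EqvGen.refl _

include h5 in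
theorem eq_iter_succ_root : ∀ (n : ℕ) (x : Δ'), (level x : ℕ) = n →
    x = (succFn level F h1)^[n] (rootFn level F h3 x) := by
  intro n
  induction n with
  | zero => intro x hx; rw [rootFn, hx]; rfl
  | succ n ih =>
    intro x hx
    have hp : 0 < (level x : ℕ) := by omega
    have hFpx := pred_spec level F h3 hp
    have hlp : (level (predFn level F h3 x) : ℕ) = n := by
      have := level_pred level F h3 h5 hp; omega
    have hroot : rootFn level F h3 x = rootFn level F h3 (predFn level F h3 x) :=
      root_F level F h3 h5 hFpx
    rw [hroot, Function.iterate_succ_apply', ← ih _ hlp]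
    exact (succ_unique level F h1 h5 hFpx).symm

end Aux

/-- Core of Theorem 8: a domain equipped with a level function into `Fin (2^m)` and a
successor relation `F` forming chains (unique successors/predecessors except at the
extremal levels, levels increasing by one along `F`) is in bijection with
(equivalence classes generated by `F`) × `Fin (2^m)` via `δ' ↦ ([δ'], level δ')`. -/
theorem stmt7 {Δ' : Type*} (m : ℕ) (level : Δ' → Fin (2 ^ m))
    (F : Δ' → Δ' → Prop)
    (h1 : ∀ x, (level x : ℕ) < 2 ^ m - 1 → ∃! y, F x y)
    (h2 : ∀ x, (level x : ℕ) = 2 ^ m - 1 → ∀ y, ¬ F x y)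
    (h3 : ∀ x, 0 < (level x : ℕ) → ∃! y, F y x)
    (h4 : ∀ x, (level x : ℕ) = 0 → ∀ y, ¬ F y x)
    (h5 : ∀ x y, F x y → (level y : ℕ) = (level x : ℕ) + 1) :
    Function.Bijective
      (fun x : Δ' => (Quotient.mk (Relation.EqvGen.setoid F) x, level x)) := by
  constructor
  · intro x y hxy
    simp only [Prod.mk.injEq] at hxy
    obtain ⟨hq, hl⟩ := hxy
    have heqv : Relation.EqvGen F x y := Quotient.exact hq
    have hroot := root_eqv level F h3 h5 heqv
    have hx := eq_iter_succ_root level F h1 h3 h5 (level x : ℕ) x rfl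
    have hy := eq_iter_succ_root level F h1 h3 h5 (level y : ℕ) y rfl
    have hln : (level x : ℕ) = (level y : ℕ) := by rw [hl]
    rw [hx, hy, hroot, hln]
  · rintro ⟨q, k⟩
    induction q using Quotient.ind with
    | _ x =>
      refine ⟨(succFn level F h1)^[(k : ℕ)] (rootFn level F h3 x), ?_⟩
      have hpos : 0 < 2 ^ m := Nat.pow_pos (by norm_num)
      have hk : (k : ℕ) ≤ 2 ^ m - 1 := by have := k.isLt; omega
      have hlr := level_root level F h3 h5 x
      have hlev : (level ((succFn level F h1)^[(k : ℕ)] (rootFn level F h3 x)) : ℕ) = (k : ℕ) := by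
        rw [level_iter_succ level F h1 h5 _ _ (by omega), hlr]; omega
      simp only [Prod.mk.injEq]
      constructor
      · apply Quotient.sound
        refine Relation.EqvGen.symm _ _ ?_
        exact Relation.EqvGen.trans _ _ _ (eqv_iter_pred level F h3 h5 _ x)
          (eqv_iter_succ level F h1 _ _)
      · exact Fin.ext hlev
end

section
/- With F-chains as above, for every element δ' and every i < 2^m, there exists an element δ'' in the same F-generated equivalence class as δ' with level(δ'') = i. -/
/-- Surjectivity part of the stacked-bijection lemma: every `F`-generated equivalence
class realizes every level `i < 2^m`. -/
theorem stmt10 {Δ' : Type*} (m : ℕ) (level : Δ' → Fin (2 ^ m))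
    (F : Δ' → Δ' → Prop)
    (h1 : ∀ x, (level x : ℕ) < 2 ^ m - 1 → ∃! y, F x y)
    (h2 : ∀ x, (level x : ℕ) = 2 ^ m - 1 → ∀ y, ¬ F x y)
    (h3 : ∀ x, 0 < (level x : ℕ) → ∃! y, F y x)
    (h4 : ∀ x, (level x : ℕ) = 0 → ∀ y, ¬ F y x)
    (h5 : ∀ x y, F x y → (level y : ℕ) = (level x : ℕ) + 1) :
    ∀ (x : Δ') (i : Fin (2 ^ m)), ∃ y : Δ', Relation.EqvGen F x y ∧ level y = i := by
  -- Step 1: from any x we can reach some z of level 0.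
  have down : ∀ n (x : Δ'), (level x : ℕ) = n →
      ∃ z, Relation.EqvGen F x z ∧ (level z : ℕ) = 0 := by
    intro n
    induction n with
    | zero => intro x hx; exact ⟨x, Relation.EqvGen.refl x, hx⟩
    | succ n ih =>
      intro x hx
      obtain ⟨y, hy, -⟩ := h3 x (by omega)
      have hly : (level y : ℕ) = n := by have := h5 y x hy; omega
      obtain ⟨z, hz, hz0⟩ := ih y hly
      exact ⟨z, Relation.EqvGen.trans _ _ _
        (Relation.EqvGen.symm _ _ (Relation.EqvGen.rel _ _ hy)) hz, hz0⟩
  -- Step 2: from a level-0 element we can reach any level k < 2^m.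
  have up : ∀ k, k < 2 ^ m → ∀ z : Δ', (level z : ℕ) = 0 →
      ∃ y, Relation.EqvGen F z y ∧ (level y : ℕ) = k := by
    intro k
    induction k with
    | zero => intro _ z hz; exact ⟨z, Relation.EqvGen.refl z, hz⟩
    | succ k ih =>
      intro hk z hz
      obtain ⟨y, hy, hly⟩ := ih (by omega) z hz
      obtain ⟨w, hw, -⟩ := h1 y (by omega)
      exact ⟨w, Relation.EqvGen.trans _ _ _ hy (Relation.EqvGen.rel _ _ hw),
        by have := h5 y w hw; omega⟩
  intro x i
  obtain ⟨z, hz, hz0⟩ := down _ x rfl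
  obtain ⟨y, hy, hly⟩ := up i i.isLt z hz0
  exact ⟨y, Relation.EqvGen.trans _ _ _ hz hy, Fin.ext hly⟩
end

section
/- Let M = (Δ, Π, σ, γ) be a standpoint structure with 2^m precisifications π_0, …, π_{2^m−1}, and let I^M be its stacked interpretation with domain Δ × Fin(2^m), where L_j holds of (δ, i) iff bit j of i is 1, F relates (δ, i) to (δ, i+1), unary P holds of (δ, i) iff δ ∈ P^{γ(π_i)}, and binary P relates (δ₁, i) to (δ₂, i) iff (δ₁, δ₂) ∈ P^{γ(π_i)}. Then I^M satisfies each of the six clauses (F1)–(F6) of the stacked formula φ^m_stack: (F1) every element with some j-th L-bit 0 has exactly one F-successor; (F2) elements with all L-bits 1 have no F-successor; (F3) every element with some L-bit 1 has exactly one F-predecessor; (F4) elements with all L-bits 0 have no F-predecessor; (F5) along F-edges, bit j is preserved iff some lower bit j' < j is 0; (F6) every binary predicate P ∈ P relates only elements with identical L-bits. -/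
/-- The `L_j` predicate of the stacked interpretation: `(δ, i)` satisfies `L_j` iff the
`j`-th bit of `i` is `1`. -/
def Lbit {Δ : Type*} {m : ℕ} (j : Fin m) (p : Δ × Fin (2 ^ m)) : Prop :=
  Nat.testBit (p.2 : ℕ) (j : ℕ)

/-- The `F` relation of the stacked interpretation: `(δ, i)` is related to `(δ, i+1)`. -/
def Fedge {Δ : Type*} {m : ℕ} (p q : Δ × Fin (2 ^ m)) : Prop :=
  p.1 = q.1 ∧ (q.2 : ℕ) = (p.2 : ℕ) + 1

lemma succbit : ∀ (j n : ℕ),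
    (Nat.testBit (n+1) j = Nat.testBit n j ↔ ∃ j' < j, Nat.testBit n j' = false)
  | 0, n => by
    simp only [Nat.testBit_zero]
    constructor
    · intro h
      exfalso
      rcases Nat.even_or_odd n with ⟨k, rfl⟩ | ⟨k, rfl⟩ <;> simp at h <;> omega
    · rintro ⟨j', hj', _⟩; omega
  | j+1, n => by
    rcases Nat.even_or_odd n with ⟨k, rfl⟩ | ⟨k, rfl⟩
    · constructor
      · intro _
        exact ⟨0, Nat.succ_pos _, by simp [Nat.testBit_zero]; omega⟩
      · intro _
        rw [Nat.testBit_succ, Nat.testBit_succ]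
        have h2 : (k + k + 1) / 2 = (k + k) / 2 := by omega
        rw [h2]
    · rw [Nat.testBit_succ, Nat.testBit_succ]
      have h2 : (2*k+1+1)/2 = (2*k+1)/2 + 1 := by omega
      rw [h2, succbit j ((2*k+1)/2)]
      constructor
      · rintro ⟨j', hj', hb⟩
        exact ⟨j'+1, by omega, by rwa [Nat.testBit_succ]⟩
      · rintro ⟨j', hj', hb⟩
        match j' with
        | 0 =>
          exfalso
          simp [Nat.testBit_zero] at hb
        | j''+1 => exact ⟨j'', by omega, by rwa [Nat.testBit_succ] at hb⟩


/-- Lemma 7: the stacked interpretation of a standpoint structure with `2^m`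
precisifications (indexed by `Fin (2^m)`, with unary interpretations `uI` and binary
interpretations `bI`) satisfies all six clauses (F1)–(F6) of `φ^m_stack`. -/
theorem stmt11 {Δ U B : Type*} (m : ℕ)
    (uI : Fin (2 ^ m) → U → Set Δ) (bI : Fin (2 ^ m) → B → Set (Δ × Δ)) :
    -- (F1) every element with some L-bit 0 has exactly one F-successor
    (∀ p : Δ × Fin (2 ^ m), (∃ j : Fin m, ¬ Lbit j p) → ∃! q, Fedge p q) ∧
    -- (F2) elements with all L-bits 1 have no F-successor
    (∀ p : Δ × Fin (2 ^ m), (∀ j : Fin m, Lbit j p) → ∀ q, ¬ Fedge p q) ∧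
    -- (F3) every element with some L-bit 1 has exactly one F-predecessor
    (∀ p : Δ × Fin (2 ^ m), (∃ j : Fin m, Lbit j p) → ∃! q, Fedge q p) ∧
    -- (F4) elements with all L-bits 0 have no F-predecessor
    (∀ p : Δ × Fin (2 ^ m), (∀ j : Fin m, ¬ Lbit j p) → ∀ q, ¬ Fedge q p) ∧
    -- (F5) along F-edges, bit j is preserved iff some lower bit j' < j is 0
    (∀ p q : Δ × Fin (2 ^ m), Fedge p q →
      ∀ j : Fin m, ((Lbit j p ↔ Lbit j q) ↔ ∃ j' : Fin m, j' < j ∧ ¬ Lbit j' p)) ∧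
    -- (F6) every binary predicate relates only elements with identical L-bits
    (∀ (P : B) (p q : Δ × Fin (2 ^ m)),
      (p.2 = q.2 ∧ (p.1, q.1) ∈ bI p.2 P) → ∀ j : Fin m, (Lbit j p ↔ Lbit j q)) := by
  refine ⟨?_, ?_, ?_, ?_, ?_, ?_⟩
  · -- F1
    rintro ⟨δ, i⟩ ⟨j, hj⟩
    have hi1 : (i : ℕ) + 1 < 2 ^ m := by
      rcases Nat.lt_or_ge ((i:ℕ) + 1) (2 ^ m) with h | h
      · exact h
      · exfalso
        have : (i : ℕ) = 2 ^ m - 1 := by have := i.isLt; omega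
        apply hj
        show Nat.testBit _ _ = true
        rw [this, Nat.testBit_two_pow_sub_one]
        simpa using j.isLt
    refine ⟨(δ, ⟨(i:ℕ)+1, hi1⟩), ⟨rfl, rfl⟩, ?_⟩
    rintro ⟨δ', i'⟩ ⟨h1, h2⟩
    simp only at h1 h2
    subst h1
    ext <;> simp [h2]
  · -- F2
    rintro ⟨δ, i⟩ hall ⟨δ', i'⟩ ⟨_, h2⟩
    have : (i : ℕ) = 2 ^ m - 1 := by
      apply Nat.eq_of_testBit_eq
      intro j
      rw [Nat.testBit_two_pow_sub_one]
      by_cases hj : j < m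
      · have := hall ⟨j, hj⟩
        simp only [Lbit] at this
        simp [hj]; exact this
      · simp [hj]
        exact Nat.testBit_lt_two_pow (lt_of_lt_of_le i.isLt (Nat.pow_le_pow_right (by norm_num) (by omega)))
    have := i'.isLt
    simp only at h2
    omega
  · -- F3
    rintro ⟨δ, i⟩ ⟨j, hj⟩
    have hi0 : (i : ℕ) ≠ 0 := by
      intro h
      have hb : Nat.testBit (i:ℕ) (j:ℕ) = true := hj
      rw [h, Nat.zero_testBit] at hb
      exact Bool.noConfusion hb
    obtain ⟨k, hk⟩ : ∃ k, (i : ℕ) = k + 1 := ⟨(i:ℕ) - 1, by omega⟩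
    refine ⟨(δ, ⟨k, by have := i.isLt; omega⟩), ⟨rfl, by simp [hk]⟩, ?_⟩
    rintro ⟨δ', i'⟩ ⟨h1, h2⟩
    simp only at h1 h2
    subst h1
    ext <;> simp <;> omega
  · -- F4
    rintro ⟨δ, i⟩ hall ⟨δ', i'⟩ ⟨_, h2⟩
    have : (i : ℕ) = 0 := by
      apply Nat.eq_of_testBit_eq
      intro j
      rw [Nat.zero_testBit]
      by_cases hj : j < m
      · have := hall ⟨j, hj⟩
        simp only [Lbit] at this
        simpa using this
      · exact Nat.testBit_lt_two_pow (lt_of_lt_of_le i.isLt (Nat.pow_le_pow_right (by norm_num) (by omega)))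
    simp only at h2
    omega
  · -- F5
    rintro ⟨δ, i⟩ ⟨δ', i'⟩ ⟨_, h2⟩ j
    simp only at h2
    simp only [Lbit]
    rw [show ((i' : ℕ)) = (i:ℕ) + 1 from h2]
    have key := succbit (j:ℕ) (i:ℕ)
    constructor
    · intro h
      have hb : Nat.testBit ((i:ℕ)+1) (j:ℕ) = Nat.testBit (i:ℕ) (j:ℕ) := by
        cases hti : Nat.testBit (i:ℕ) (j:ℕ) <;> cases hti' : Nat.testBit ((i:ℕ)+1) (j:ℕ) <;>
          simp_all
      obtain ⟨j', hj', hb'⟩ := key.mp hb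
      exact ⟨⟨j', lt_trans hj' j.isLt⟩, hj', by simp [hb']⟩
    · rintro ⟨j', hj', hb'⟩
      have hb : Nat.testBit ((i:ℕ)+1) (j:ℕ) = Nat.testBit (i:ℕ) (j:ℕ) :=
        key.mpr ⟨j', hj', by simpa using hb'⟩
      rw [hb]
  · -- F6
    rintro P ⟨δ, i⟩ ⟨δ', i'⟩ ⟨h1, _⟩ j
    simp only at h1
    subst h1
    exact Iff.rfl
end

section
/- Let M be a standpoint structure over unary and binary predicates including distinguished unary predicates E_0, …, E_ℓ, with 2^m precisifications, and let I_M be its stacked interpretation. Then all E_i are rigid in M (i.e., E_i^{γ(π)} is the same set for all precisifications π) if and only if I_M satisfies: for all x, y, if F(x, y) then for every i ≤ ℓ, E_i(x) ↔ E_i(y). -/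
/-- Lemma 10: the distinguished predicates `E_0, …, E_ℓ` are rigid in a standpoint
structure with `2^m` precisifications iff its stacked interpretation satisfies
`∀ x y, F(x,y) → ⋀_i (E_i(x) ↔ E_i(y))`, where in the stacked interpretation
`F` relates `(δ, i)` to `(δ, i+1)` and `E_i` holds of `(δ, j)` iff `δ ∈ E_i^{γ(π_j)}`. -/
theorem stmt12 {Δ : Type*} (m ℓ : ℕ)
    (E : Fin (ℓ + 1) → Fin (2 ^ m) → Set Δ) :
    (∀ (i : Fin (ℓ + 1)) (π π' : Fin (2 ^ m)), E i π = E i π') ↔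
    (∀ p q : Δ × Fin (2 ^ m), (p.1 = q.1 ∧ (q.2 : ℕ) = (p.2 : ℕ) + 1) →
      ∀ i : Fin (ℓ + 1), (p.1 ∈ E i p.2 ↔ q.1 ∈ E i q.2)) := by
  constructor
  · rintro h ⟨δ, π⟩ ⟨δ', π'⟩ ⟨h1, h2⟩ i
    simp only at h1
    subst h1
    rw [h i π π']
  · intro h i π π'
    have pos : 0 < 2 ^ m := Nat.pow_pos (by norm_num)
    have key : ∀ n (hn : n < 2 ^ m), E i ⟨n, hn⟩ = E i ⟨0, pos⟩ := by
      intro n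
      induction n with
      | zero => intro hn; rfl
      | succ k ih =>
        intro hn
        have hk : k < 2 ^ m := Nat.lt_of_succ_lt hn
        rw [← ih hk]
        ext δ
        exact (h (δ, ⟨k, hk⟩) (δ, ⟨k + 1, hn⟩) ⟨rfl, rfl⟩ i).symm
    obtain ⟨n, hn⟩ := π
    obtain ⟨n', hn'⟩ := π'
    rw [key n hn, key n' hn']
end
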